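/- Let q^1,...,q^n be independent exponentially distributed random variables with P[q^i ≥ a] = e^{-a} for a ≥ 0, and let k^1,...,k^n be real numbers with u := Σ_{i=1}^n e^{-k^i} < ∞. Then E[max_i (q^i - k^i)] ≤ 1 + ln u. -/

import Mathlib

open MeasureTheory

/-- Maximum of shifted exponential distributions:
E[sup_i (qⁱ - kⁱ)] ≤ 1 + ln u where u = Σ_i e^{-kⁱ}. -/
theorem expected_max_shifted_exponentials {Ω : Type*} [MeasurableSpace Ω]
    (μ : Measure Ω) [IsProbabilityMeasure μ] {ι : Type*} [Countable ι] [Nonempty ι]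
    (q : ι → Ω → ℝ) (hmeas : ∀ i, Measurable (q i))
    (hindep : ProbabilityTheory.iIndepFun q μ)
    (htail : ∀ i, ∀ a : ℝ, 0 ≤ a → μ {ω | a ≤ q i ω} = ENNReal.ofReal (Real.exp (-a)))
    (htail' : ∀ i, ∀ a : ℝ, a < 0 → μ {ω | a ≤ q i ω} = 1)
    (k : ι → ℝ) (hsum : Summable fun i => Real.exp (-k i)) :
    ∫ ω, (⨆ i, (q i ω - k i)) ∂μ ≤ 1 + Real.log (∑' i, Real.exp (-k i)) := by
  classical
  obtain ⟨i0⟩ := ‹Nonempty ι›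
  set u := ∑' i, Real.exp (-k i) with hu_def
  have hu_pos : 0 < u :=
    Summable.tsum_pos hsum (fun i => (Real.exp_pos _).le) i0 (Real.exp_pos _)
  set M := fun ω => ⨆ i, (q i ω - k i) with hM_def
  have hMmeas : Measurable M :=
    Measurable.iSup fun i => (hmeas i).sub measurable_const
  -- tail bound for a single variable
  have single : ∀ (i : ι) (c : ℝ),
      μ {ω | c < q i ω - k i} ≤ ENNReal.ofReal (Real.exp (-(k i + c))) := by
    intro i c
    have hsub : {ω | c < q i ω - k i} ⊆ {ω | k i + c ≤ q i ω} := by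
      intro ω hω
      simp only [Set.mem_setOf_eq] at *
      linarith
    refine (measure_mono hsub).trans ?_
    rcases le_or_gt 0 (k i + c) with h | h
    · rw [htail i _ h]
    · rw [htail' i _ h, ← ENNReal.ofReal_one]
      exact ENNReal.ofReal_le_ofReal (Real.one_le_exp (by linarith))
  -- union bound
  have union_bound : ∀ c : ℝ,
      μ (⋃ i, {ω | c < q i ω - k i}) ≤ ENNReal.ofReal (Real.exp (-c) * u) := by
    intro c
    have hexp : ∀ i, Real.exp (-(k i + c)) = Real.exp (-c) * Real.exp (-k i) := by
      intro i
      rw [← Real.exp_add]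
      ring_nf
    calc μ (⋃ i, {ω | c < q i ω - k i})
        ≤ ∑' i, μ {ω | c < q i ω - k i} := measure_iUnion_le _
      _ ≤ ∑' i, ENNReal.ofReal (Real.exp (-(k i + c))) :=
          ENNReal.tsum_le_tsum fun i => single i c
      _ = ENNReal.ofReal (Real.exp (-c) * u) := by
          rw [← ENNReal.ofReal_tsum_of_nonneg (fun i => (Real.exp_pos _).le)]
          · congr 1
            simp_rw [hexp]
            exact tsum_mul_left
          · exact (summable_congr hexp).2 (hsum.mul_left _)
  -- tail bound for the sup
  have tail : ∀ c : ℝ, μ {ω | c < M ω} ≤ ENNReal.ofReal (Real.exp (-c) * u) := by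
    intro c
    refine (measure_mono ?_).trans (union_bound c)
    intro ω hω
    have hω' : c < ⨆ i, (q i ω - k i) := hω
    rcases em (BddAbove (Set.range fun i => q i ω - k i)) with hb | hb
    · obtain ⟨i, hi⟩ := exists_lt_of_lt_ciSup hω'
      exact Set.mem_iUnion.2 ⟨i, hi⟩
    · obtain ⟨x, ⟨i, rfl⟩, hx⟩ := not_bddAbove_iff.1 hb c
      exact Set.mem_iUnion.2 ⟨i, hx⟩
  set L := Real.log u with hL_def
  set g := fun ω => max (M ω - L) 0 with hg_def
  have hg_meas : Measurable g := (hMmeas.sub measurable_const).max measurable_const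
  have hg_nonneg : ∀ ω, 0 ≤ g ω := fun ω => le_max_right _ _
  -- tail bound for g
  have hgtail : ∀ t : ℝ, 0 < t → μ {ω | t < g ω} ≤ ENNReal.ofReal (Real.exp (-t)) := by
    intro t ht
    have hsub : {ω | t < g ω} ⊆ {ω | L + t < M ω} := by
      intro ω hω
      simp only [Set.mem_setOf_eq, hg_def, lt_max_iff] at hω ⊢
      rcases hω with h | h
      · linarith
      · linarith
    refine (measure_mono hsub).trans ((tail _).trans_eq ?_)
    congr 1
    rw [neg_add, Real.exp_add, hL_def, Real.exp_neg, Real.exp_log hu_pos]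
    field_simp
  have exp_int : IntegrableOn (fun t : ℝ => Real.exp (-t)) (Set.Ioi (0:ℝ)) := by
    simpa using exp_neg_integrableOn_Ioi 0 one_pos
  -- lintegral bound for g
  have hg_lint : ∫⁻ ω, ENNReal.ofReal (g ω) ∂μ ≤ 1 := by
    rw [lintegral_eq_lintegral_meas_lt μ (ae_of_all _ hg_nonneg) hg_meas.aemeasurable]
    calc ∫⁻ t in Set.Ioi (0:ℝ), μ {ω | t < g ω}
        ≤ ∫⁻ t in Set.Ioi (0:ℝ), ENNReal.ofReal (Real.exp (-t)) := by
          refine setLIntegral_mono (Real.measurable_exp.comp measurable_neg).ennreal_ofReal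
            fun t ht => hgtail t ht
      _ = ENNReal.ofReal (∫ t in Set.Ioi (0:ℝ), Real.exp (-t)) :=
          (ofReal_integral_eq_lintegral_ofReal exp_int
            (ae_of_all _ fun t => (Real.exp_pos _).le)).symm
      _ = 1 := by rw [integral_exp_neg_Ioi_zero, ENNReal.ofReal_one]
  have hg_int : Integrable g μ := by
    refine ⟨hg_meas.aestronglyMeasurable, ?_⟩
    rw [hasFiniteIntegral_iff_ofReal (ae_of_all _ hg_nonneg)]
    exact lt_of_le_of_lt hg_lint ENNReal.one_lt_top
  have hg_integral : ∫ ω, g ω ∂μ ≤ 1 := by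
    rw [integral_eq_lintegral_of_nonneg_ae (ae_of_all _ hg_nonneg)
      hg_meas.aestronglyMeasurable]
    calc (∫⁻ ω, ENNReal.ofReal (g ω) ∂μ).toReal
        ≤ (1 : ENNReal).toReal := ENNReal.toReal_mono ENNReal.one_ne_top hg_lint
      _ = 1 := ENNReal.toReal_one
  -- q i0 is a.e. nonnegative
  have hq0 : ∀ᵐ ω ∂μ, 0 ≤ q i0 ω := by
    rw [ae_iff]
    have hset : {ω | ¬ (0:ℝ) ≤ q i0 ω} = {ω | (0:ℝ) ≤ q i0 ω}ᶜ := rfl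
    have hms : MeasurableSet {ω | (0:ℝ) ≤ q i0 ω} :=
      measurableSet_le measurable_const (hmeas i0)
    have h1 : μ {ω | (0:ℝ) ≤ q i0 ω} = 1 := by simpa using htail i0 0 le_rfl
    rw [hset, measure_compl hms (measure_ne_top _ _), h1, measure_univ, tsub_self]
  -- q i0 is integrable
  have hq_lint : ∫⁻ ω, ENNReal.ofReal (q i0 ω) ∂μ ≤ 1 := by
    rw [lintegral_eq_lintegral_meas_lt μ hq0 (hmeas i0).aemeasurable]
    calc ∫⁻ t in Set.Ioi (0:ℝ), μ {ω | t < q i0 ω}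
        ≤ ∫⁻ t in Set.Ioi (0:ℝ), ENNReal.ofReal (Real.exp (-t)) := by
          refine setLIntegral_mono (Real.measurable_exp.comp measurable_neg).ennreal_ofReal
            fun t ht => ?_
          refine (measure_mono fun ω hω => ?_).trans_eq (htail i0 t (le_of_lt ht))
          exact le_of_lt (show t < q i0 ω from hω)
      _ = ENNReal.ofReal (∫ t in Set.Ioi (0:ℝ), Real.exp (-t)) :=
          (ofReal_integral_eq_lintegral_ofReal exp_int
            (ae_of_all _ fun t => (Real.exp_pos _).le)).symm
      _ = 1 := by rw [integral_exp_neg_Ioi_zero, ENNReal.ofReal_one]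
  have hq_int : Integrable (q i0) μ := by
    refine ⟨(hmeas i0).aestronglyMeasurable, ?_⟩
    rw [hasFiniteIntegral_iff_ofReal hq0]
    exact lt_of_le_of_lt hq_lint ENNReal.one_lt_top
  -- the family is a.e. bounded above
  have hbdd : ∀ᵐ ω ∂μ, BddAbove (Set.range fun i => q i ω - k i) := by
    rw [ae_iff]
    have key : ∀ n : ℕ, μ {ω | ¬ BddAbove (Set.range fun i => q i ω - k i)}
        ≤ ENNReal.ofReal (Real.exp (-(n:ℝ)) * u) := by
      intro n
      refine (measure_mono ?_).trans (union_bound n)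
      intro ω hω
      obtain ⟨x, ⟨i, rfl⟩, hx⟩ := not_bddAbove_iff.1 hω (n:ℝ)
      exact Set.mem_iUnion.2 ⟨i, hx⟩
    have h0 : Filter.Tendsto (fun n : ℕ => ENNReal.ofReal (Real.exp (-(n:ℝ)) * u))
        Filter.atTop (nhds 0) := by
      rw [← ENNReal.ofReal_zero]
      apply ENNReal.tendsto_ofReal
      have h1 : Filter.Tendsto (fun n : ℕ => Real.exp (-(n:ℝ))) Filter.atTop (nhds 0) :=
        Real.tendsto_exp_neg_atTop_nhds_zero.comp tendsto_natCast_atTop_atTop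
      simpa using h1.mul_const u
    have := ge_of_tendsto' h0 key
    exact le_antisymm this zero_le
  -- pointwise bounds on M
  have hub : ∀ ω, M ω ≤ L + g ω := by
    intro ω
    have h1 : M ω - L ≤ g ω := le_max_left _ _
    linarith
  have hlb : ∀ᵐ ω ∂μ, q i0 ω - k i0 ≤ M ω := by
    filter_upwards [hbdd] with ω hb
    exact le_ciSup hb i0
  set bnd := fun ω => g ω + q i0 ω + (|L| + |k i0|) with hbnd_def
  have hbnd_int : Integrable bnd μ := (hg_int.add hq_int).add (integrable_const _)
  have hM_bound : ∀ᵐ ω ∂μ, ‖M ω‖ ≤ bnd ω := by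
    filter_upwards [hlb, hq0] with ω h1 h2
    rw [Real.norm_eq_abs, abs_le]
    have hg' := hg_nonneg ω
    have hLa := le_abs_self L
    have hLn := neg_abs_le L
    have hka := le_abs_self (k i0)
    have hkn := neg_abs_le (k i0)
    have hub' := hub ω
    constructor
    · simp only [hbnd_def, neg_add, neg_le]
      nlinarith
    · simp only [hbnd_def]
      nlinarith
  have hM_int : Integrable M μ :=
    Integrable.mono' hbnd_int hMmeas.aestronglyMeasurable hM_bound
  calc ∫ ω, M ω ∂μ ≤ ∫ ω, (L + g ω) ∂μ :=
        integral_mono_ae hM_int ((integrable_const L).add hg_int) (ae_of_all _ hub)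
    _ = L + ∫ ω, g ω ∂μ := by
        rw [integral_add (integrable_const L) hg_int, integral_const]
        simp
    _ ≤ L + 1 := by linarith
    _ = 1 + Real.log u := by rw [hL_def]; ring
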